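/- arXiv:2207.11769 — 3 statements merged into one kernel-verified Lean document; each statement's English description precedes it below -/
import Mathlib

section
/- Let x, x_{m+1}, ..., x_l be exchangeable (in particular IID) real-valued random scores with values that are almost surely distinct. Define the p-value p(x) = (|{j : m+1 ≤ j ≤ l, x ≤ x_j}| + 1)/(l - m + 1). Then p(x) is uniformly distributed on {1/(l-m+1), 2/(l-m+1), ..., 1}. -/
open MeasureTheory ProbabilityTheory Set
open scoped ENNReal

namespace ConformalAux

variable {k : ℕ}

noncomputable def cnt (k : ℕ) (v : Fin (k + 1) → ℝ) (i : Fin (k + 1)) : ℕ :=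
  (Finset.univ.filter (fun j => j ≠ i ∧ v i ≤ v j)).card

lemma cnt_le (v : Fin (k + 1) → ℝ) (i : Fin (k + 1)) : cnt k v i ≤ k := by
  have hsub : (Finset.univ.filter (fun j => j ≠ i ∧ v i ≤ v j)) ⊆ Finset.univ.erase i := by
    intro j hj
    simp only [Finset.mem_filter] at hj
    exact Finset.mem_erase.mpr ⟨hj.2.1, Finset.mem_univ _⟩
  calc cnt k v i ≤ (Finset.univ.erase i).card := Finset.card_le_card hsub
    _ = k := by simp

lemma cnt_strict (v : Fin (k + 1) → ℝ) {i j : Fin (k + 1)} (hij : v i < v j) :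
    cnt k v j < cnt k v i := by
  apply Finset.card_lt_card
  rw [Finset.ssubset_iff_of_subset]
  · refine ⟨j, ?_, ?_⟩
    · simp only [Finset.mem_filter, Finset.mem_univ, true_and]
      exact ⟨fun h => absurd (h ▸ hij) (lt_irrefl _), le_of_lt hij⟩
    · simp
  · intro l hl
    simp only [Finset.mem_filter, Finset.mem_univ, true_and] at hl ⊢
    have hvl : v i < v l := lt_of_lt_of_le hij hl.2
    exact ⟨fun h => absurd (h ▸ hvl) (lt_irrefl _), le_of_lt hvl⟩

lemma cnt_inj (v : Fin (k + 1) → ℝ) (hv : Function.Injective v) :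
    Function.Injective (cnt k v) := by
  intro a b h
  by_contra hne
  rcases lt_trichotomy (v a) (v b) with hlt | heq | hgt
  · exact absurd h (Nat.ne_of_gt (cnt_strict v hlt))
  · exact hne (hv heq)
  · exact absurd h (Nat.ne_of_lt (cnt_strict v hgt))

lemma cnt_exists (v : Fin (k + 1) → ℝ) (hv : Function.Injective v) {r : ℕ} (hr : r ≤ k) :
    ∃ i, cnt k v i = r := by
  let f : Fin (k + 1) → Fin (k + 1) := fun i => ⟨cnt k v i, Nat.lt_succ_of_le (cnt_le v i)⟩
  have hf : Function.Injective f := by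
    intro a b h
    exact cnt_inj v hv (by simpa [f, Fin.ext_iff] using h)
  obtain ⟨i, hi⟩ := (Finite.injective_iff_surjective.mp hf) ⟨r, Nat.lt_succ_of_le hr⟩
  exact ⟨i, by simpa [f, Fin.ext_iff] using hi⟩

lemma cnt_comp (v : Fin (k + 1) → ℝ) (σ : Equiv.Perm (Fin (k + 1))) (i : Fin (k + 1)) :
    cnt k (fun j => v (σ j)) i = cnt k v (σ i) := by
  unfold cnt
  exact Finset.card_equiv σ (by intro j; simp [σ.injective.ne_iff])

lemma cnt_last (v : Fin (k + 1) → ℝ) :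
    cnt k v (Fin.last k) =
      (Finset.univ.filter (fun j : Fin k => v (Fin.last k) ≤ v j.castSucc)).card := by
  rw [cnt, ← Finset.card_image_of_injective _ (Fin.castSucc_injective k)]
  congr 1
  ext j
  simp only [Finset.mem_filter, Finset.mem_univ, true_and, Finset.mem_image]
  constructor
  · rintro ⟨hne, hle⟩
    obtain ⟨j', rfl⟩ := Fin.exists_castSucc_eq.mpr hne
    exact ⟨j', hle, rfl⟩
  · rintro ⟨j', hle, rfl⟩
    exact ⟨(Fin.castSucc_lt_last j').ne, hle⟩

lemma measurable_cnt (i : Fin (k + 1)) :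
    Measurable (fun v : Fin (k + 1) → ℝ => cnt k v i) := by
  unfold cnt
  simp_rw [Finset.card_filter]
  apply Finset.measurable_sum
  intro j _
  apply Measurable.ite _ measurable_const measurable_const
  have : {v : Fin (k + 1) → ℝ | j ≠ i ∧ v i ≤ v j}
      = {v : Fin (k + 1) → ℝ | j ≠ i} ∩ {v | v i ≤ v j} := rfl
  rw [this]
  exact (MeasurableSet.const _).inter
    (measurableSet_le (measurable_pi_apply i) (measurable_pi_apply j))

end ConformalAux

/-- Conformal calibration lemma: with `k` exchangeable calibration scores and one
exchangeable test score (index `Fin.last k`), all almost surely pairwise distinct,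
the conformal p-value `(|{j : x ≤ x_j}| + 1)/(k+1)` is uniformly distributed on
`{1/(k+1), ..., (k+1)/(k+1)}`. -/
theorem conformal_p_value_uniform
    {Ω : Type*} [MeasurableSpace Ω] (μ : Measure Ω) [IsProbabilityMeasure μ]
    (k : ℕ) (hk : 0 < k) (X : Fin (k + 1) → Ω → ℝ) (hXmeas : ∀ i, Measurable (X i))
    (hexch : ∀ σ : Equiv.Perm (Fin (k + 1)),
      Measure.map (fun ω i => X (σ i) ω) μ = Measure.map (fun ω i => X i ω) μ)
    (hdistinct : ∀ᵐ ω ∂μ, ∀ i j, i ≠ j → X i ω ≠ X j ω)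
    (p : Ω → ℝ)
    (hp : ∀ ω, p ω =
      (((Finset.univ.filter (fun j : Fin k =>
          X (Fin.last k) ω ≤ X j.castSucc ω)).card : ℝ) + 1) / (k + 1)) :
    ∀ i ∈ Finset.Icc 1 (k + 1),
      μ {ω | p ω = (i : ℝ) / (k + 1)} = 1 / (k + 1 : ℝ≥0∞) := by
  intro i hi
  obtain ⟨hi1, hi2⟩ := Finset.mem_Icc.mp hi
  set r : ℕ := i - 1 with hr
  have hrk : r ≤ k := by omega
  set J : Ω → (Fin (k + 1) → ℝ) := fun ω j => X j ω with hJ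
  have hJmeas : Measurable J := measurable_pi_lambda _ (fun j => hXmeas j)
  set D : Fin (k + 1) → Set Ω :=
    fun a => {ω | ConformalAux.cnt k (fun j => X j ω) a = r} with hD
  have hDmeas : ∀ a, MeasurableSet (D a) := fun a =>
    ((ConformalAux.measurable_cnt a).comp hJmeas) (measurableSet_singleton r)
  -- all D a have the same measure
  have hDeq : ∀ a, μ (D a) = μ (D (Fin.last k)) := by
    intro a
    set σ : Equiv.Perm (Fin (k + 1)) := Equiv.swap (Fin.last k) a with hσ
    have hT : MeasurableSet {v : Fin (k + 1) → ℝ | ConformalAux.cnt k v (Fin.last k) = r} :=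
      (ConformalAux.measurable_cnt _) (measurableSet_singleton r)
    have hσmeas : Measurable (fun ω (j : Fin (k + 1)) => X (σ j) ω) :=
      measurable_pi_lambda _ (fun j => hXmeas (σ j))
    have h2 := congrArg
      (fun m : Measure (Fin (k + 1) → ℝ) =>
        m {v | ConformalAux.cnt k v (Fin.last k) = r}) (hexch σ)
    rw [Measure.map_apply hσmeas hT, Measure.map_apply hJmeas hT] at h2
    have hpre1 : (fun ω (j : Fin (k + 1)) => X (σ j) ω) ⁻¹'
        {v | ConformalAux.cnt k v (Fin.last k) = r} = D a := by
      ext ω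
      simp only [Set.mem_preimage, Set.mem_setOf_eq, hD]
      rw [ConformalAux.cnt_comp (fun j => X j ω) σ (Fin.last k)]
      simp [hσ, Equiv.swap_apply_left]
    have hpre2 : J ⁻¹' {v | ConformalAux.cnt k v (Fin.last k) = r} = D (Fin.last k) := by
      ext ω; simp [hD, hJ]
    rw [hpre1, hpre2] at h2
    exact h2
  -- the good set
  set G : Set Ω := {ω | ∀ a b : Fin (k + 1), a ≠ b → X a ω ≠ X b ω} with hG
  have hGmeas : MeasurableSet G := by
    have : G = ⋂ a, ⋂ b, {ω | a ≠ b → X a ω ≠ X b ω} := by ext ω; simp [hG]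
    rw [this]
    refine MeasurableSet.iInter fun a => MeasurableSet.iInter fun b => ?_
    by_cases hab : a = b
    · simp [hab]
    · have : {ω | a ≠ b → X a ω ≠ X b ω} = {ω | X a ω = X b ω}ᶜ := by
        ext ω; simp [hab]
      rw [this]
      exact (measurableSet_eq_fun (hXmeas a) (hXmeas b)).compl
  have hGcompl : μ Gᶜ = 0 := by
    have := ae_iff.mp hdistinct
    simpa [hG, Set.compl_setOf] using this
  have hGinj : ∀ ω ∈ G, Function.Injective (fun j => X j ω) := by
    intro ω hω a b hab
    by_contra hne
    exact hω a b hne hab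
  -- partition
  set E : Fin (k + 1) → Set Ω := fun a => D a ∩ G with hE
  have hEmeas : ∀ a, MeasurableSet (E a) := fun a => (hDmeas a).inter hGmeas
  have hEdisj : Pairwise (Function.onFun Disjoint E) := by
    intro a b hab
    simp only [Function.onFun]
    rw [Set.disjoint_left]
    rintro ω ⟨hωa, hωG⟩ ⟨hωb, _⟩
    exact hab (ConformalAux.cnt_inj _ (hGinj ω hωG) (hωa.trans hωb.symm))
  have hEunion : (⋃ a, E a) = G := by
    apply Set.Subset.antisymm
    · exact Set.iUnion_subset fun a => Set.inter_subset_right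
    · intro ω hω
      obtain ⟨a, ha⟩ := ConformalAux.cnt_exists (fun j => X j ω) (hGinj ω hω) hrk
      exact Set.mem_iUnion.mpr ⟨a, ha, hω⟩
  have hGone : μ G = 1 := by
    have : μ G = μ Set.univ := measure_congr (by
      rw [Filter.eventuallyEq_set]
      filter_upwards [measure_eq_zero_iff_ae_notMem.mp hGcompl] with ω hω
      simp at hω ⊢
      exact hω)
    simpa using this
  have hsum : ∑ a : Fin (k + 1), μ (E a) = 1 := by
    rw [← tsum_fintype (L := SummationFilter.unconditional _), ← measure_iUnion hEdisj hEmeas, hEunion, hGone]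
  have hED : ∀ a, μ (E a) = μ (D a) := fun a => measure_inter_conull hGcompl
  have hsum2 : (k + 1 : ℝ≥0∞) * μ (D (Fin.last k)) = 1 := by
    have h : ∑ a : Fin (k + 1), μ (D (Fin.last k)) = 1 := by
      rw [← hsum]
      exact Finset.sum_congr rfl fun a _ => ((hED a).trans (hDeq a)).symm
    rw [Finset.sum_const, Finset.card_univ, Fintype.card_fin, nsmul_eq_mul] at h
    have hc : ((k + 1 : ℕ) : ℝ≥0∞) = (k : ℝ≥0∞) + 1 := by push_cast; ring
    rwa [hc] at h
  -- identify the target set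
  have hset : {ω | p ω = (i : ℝ) / (k + 1)} = D (Fin.last k) := by
    ext ω
    simp only [Set.mem_setOf_eq, hp ω, hD]
    rw [div_left_inj' (by positivity : ((k : ℝ) + 1) ≠ 0),
      ConformalAux.cnt_last]
    constructor
    · intro h
      have h' : ((Finset.univ.filter (fun j : Fin k =>
          X (Fin.last k) ω ≤ X j.castSucc ω)).card + 1 : ℕ) = i := by exact_mod_cast h
      omega
    · intro h
      have h' : ((Finset.univ.filter (fun j : Fin k =>
          X (Fin.last k) ω ≤ X j.castSucc ω)).card + 1 : ℕ) = i := by omega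
      exact_mod_cast h'
  rw [hset]
  rw [ENNReal.eq_div_iff (by simp : ((k : ℝ≥0∞) + 1) ≠ 0) (by finiteness)]
  exact hsum2
end

section
/- Let α, α_{m+1}, ..., α_l be exchangeable real-valued random variables (possibly with ties) and define p = (|{j : α ≤ α_j}| + 1)/(l - m + 1). Then for every ε ∈ (0,1), Pr(p ≤ ε) ≤ ε. -/
open MeasureTheory Set
open scoped ENNReal

/-- The rank statistic: number of indices `j ≠ i` with `a i ≤ a j`. -/
noncomputable def Rk {n : ℕ} (a : Fin n → ℝ) (i : Fin n) : ℕ :=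
  (Finset.univ.filter fun j => j ≠ i ∧ a i ≤ a j).card

lemma Rk_card_le {n : ℕ} (a : Fin n → ℝ) (m : ℕ) :
    (Finset.univ.filter fun i => Rk a i < m).card ≤ m := by
  set S := Finset.univ.filter fun i => Rk a i < m with hS
  rcases S.eq_empty_or_nonempty with h | h
  · simp [h]
  · obtain ⟨i, hiS, hmin⟩ := S.exists_min_image a h
    have hsub : S.erase i ⊆ Finset.univ.filter fun j => j ≠ i ∧ a i ≤ a j := by
      intro j hj
      rw [Finset.mem_erase] at hj
      simp only [Finset.mem_filter, Finset.mem_univ, true_and]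
      exact ⟨hj.1, hmin j hj.2⟩
    have h1 : (S.erase i).card ≤ Rk a i := Finset.card_le_card hsub
    have h2 : Rk a i < m := by
      rw [hS, Finset.mem_filter] at hiS; exact hiS.2
    have h3 : (S.erase i).card = S.card - 1 := Finset.card_erase_of_mem hiS
    have h4 : 1 ≤ S.card := Finset.card_pos.mpr h
    omega

lemma measurable_Rk {n : ℕ} (i : Fin n) :
    Measurable fun a : Fin n → ℝ => Rk a i := by
  have heq : (fun a : Fin n → ℝ => Rk a i)
      = fun a => ∑ j : Fin n, if j ≠ i ∧ a i ≤ a j then 1 else 0 := by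
    funext a
    rw [Rk, Finset.card_filter]
  rw [heq]
  apply Finset.measurable_sum
  intro j _
  by_cases hji : j = i
  · simp [hji]
  · have : (fun a : Fin n → ℝ => if j ≠ i ∧ a i ≤ a j then 1 else 0)
        = fun a => if a i ≤ a j then 1 else 0 := by
      funext a; simp [hji]
    rw [this]
    exact Measurable.ite (measurableSet_le (measurable_pi_apply i) (measurable_pi_apply j))
      measurable_const measurable_const

lemma Rk_comp {n : ℕ} (a : Fin n → ℝ) (σ : Equiv.Perm (Fin n)) (i : Fin n) :
    Rk (fun j => a (σ j)) i = Rk a (σ i) := by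
  unfold Rk
  apply Finset.card_bij (fun j _ => σ j)
  · intro j hj
    simp only [Finset.mem_filter, Finset.mem_univ, true_and] at hj ⊢
    exact ⟨fun h => hj.1 (σ.injective h), hj.2⟩
  · intro j1 _ j2 _ h; exact σ.injective h
  · intro j hj
    simp only [Finset.mem_filter, Finset.mem_univ, true_and] at hj ⊢
    refine ⟨σ.symm j, ⟨?_, by simpa using hj.2⟩, by simp⟩
    intro h
    exact hj.1 (by rw [← h]; simp)

lemma card_last (k : ℕ) (a : Fin (k+1) → ℝ) :
    (Finset.univ.filter fun j : Fin k => a (Fin.last k) ≤ a j.castSucc).card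
      = Rk a (Fin.last k) := by
  unfold Rk
  apply Finset.card_bij (fun j _ => Fin.castSucc j)
  · intro j hj
    simp only [Finset.mem_filter, Finset.mem_univ, true_and] at hj ⊢
    exact ⟨(Fin.castSucc_lt_last j).ne, hj⟩
  · intro j1 _ j2 _ h; exact Fin.castSucc_injective _ h
  · intro j hj
    simp only [Finset.mem_filter, Finset.mem_univ, true_and] at hj ⊢
    exact ⟨j.castPred hj.1, by simpa using hj.2, by simp⟩

/-- Conformal validity with ties: for exchangeable scores `α, α_{m+1}, ..., α_l`
(here `k` calibration scores and the test score at index `Fin.last k`), the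
rank-based p-value `p = (|{j : α ≤ α_j}| + 1)/(k+1)` satisfies `Pr(p ≤ ε) ≤ ε`. -/
theorem conformal_p_value_valid_with_ties
    {Ω : Type*} [MeasurableSpace Ω] (μ : Measure Ω) [IsProbabilityMeasure μ]
    (k : ℕ) (hk : 0 < k) (X : Fin (k + 1) → Ω → ℝ) (hXmeas : ∀ i, Measurable (X i))
    (hexch : ∀ σ : Equiv.Perm (Fin (k + 1)),
      Measure.map (fun ω i => X (σ i) ω) μ = Measure.map (fun ω i => X i ω) μ)
    (p : Ω → ℝ)
    (hp : ∀ ω, p ω =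
      (((Finset.univ.filter (fun j : Fin k =>
          X (Fin.last k) ω ≤ X j.castSucc ω)).card : ℝ) + 1) / (k + 1))
    (ε : ℝ) (hε : ε ∈ Set.Ioo (0 : ℝ) 1) :
    μ {ω | p ω ≤ ε} ≤ ENNReal.ofReal ε := by
  obtain ⟨hε0, hε1⟩ := hε
  set m : ℕ := ⌊ε * (k + 1)⌋₊ with hm
  have hkpos : (0:ℝ) < (k:ℝ) + 1 := by positivity
  have hεk : (0:ℝ) ≤ ε * (k + 1) := by positivity
  -- the joint map
  have hjoint : Measurable fun ω (i : Fin (k+1)) => X i ω :=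
    measurable_pi_lambda _ hXmeas
  set ν : Measure (Fin (k+1) → ℝ) := Measure.map (fun ω i => X i ω) μ with hν
  have hSmeas : ∀ i : Fin (k+1), MeasurableSet {a : Fin (k+1) → ℝ | Rk a i < m} := by
    intro i
    exact measurable_Rk i (show MeasurableSet {x : ℕ | x < m} from trivial)
  -- rewrite the event
  have hset : {ω | p ω ≤ ε} = (fun ω i => X i ω) ⁻¹' {a | Rk a (Fin.last k) < m} := by
    ext ω
    simp only [mem_setOf_eq, mem_preimage, hp ω]
    rw [show (fun i => X i ω) = fun i => X i ω from rfl]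
    rw [← card_last k (fun i => X i ω)]
    set c : ℕ := (Finset.univ.filter fun j : Fin k =>
        X (Fin.last k) ω ≤ X j.castSucc ω).card with hc
    constructor
    · intro h
      have h2 : (c:ℝ) + 1 ≤ ε * (k + 1) := by
        rw [div_le_iff₀ hkpos] at h
        exact h
      have h3 : c + 1 ≤ m := by
        rw [hm]
        exact Nat.le_floor (by push_cast; linarith)
      omega
    · intro h
      have h3 : c + 1 ≤ m := by omega
      have h4 : ((c:ℝ) + 1) ≤ ε * (k + 1) := by
        have := (Nat.le_floor_iff hεk).mp h3
        push_cast at this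
        linarith
      rw [div_le_iff₀ hkpos]
      exact h4
  rw [hset, Measure.map_apply hjoint (hSmeas (Fin.last k)) |>.symm, ← hν]
  -- exchangeability: all coordinates give the same probability
  have key : ∀ i : Fin (k+1),
      ν {a | Rk a i < m} = ν {a | Rk a (Fin.last k) < m} := by
    intro i
    set σ : Equiv.Perm (Fin (k+1)) := Equiv.swap i (Fin.last k) with hσdef
    have hmσ : Measurable fun ω (j : Fin (k+1)) => X (σ j) ω :=
      measurable_pi_lambda _ fun j => hXmeas (σ j)
    calc ν {a | Rk a i < m}
        = (Measure.map (fun ω j => X (σ j) ω) μ) {a | Rk a i < m} := by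
          rw [hexch σ]
      _ = μ ((fun ω j => X (σ j) ω) ⁻¹' {a | Rk a i < m}) :=
          Measure.map_apply hmσ (hSmeas i)
      _ = μ ((fun ω j => X j ω) ⁻¹' {a | Rk a (Fin.last k) < m}) := by
          congr 1
          ext ω
          simp only [mem_preimage, mem_setOf_eq]
          rw [Rk_comp (fun j => X j ω) σ i, hσdef, Equiv.swap_apply_left]
      _ = ν {a | Rk a (Fin.last k) < m} :=
          (Measure.map_apply hjoint (hSmeas (Fin.last k))).symm
  -- sum bound
  have hprob : IsProbabilityMeasure ν := by
    rw [hν]; exact Measure.isProbabilityMeasure_map hjoint.aemeasurable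
  have hsum : ∑ i : Fin (k+1), ν {a | Rk a i < m} ≤ (m : ℝ≥0∞) := by
    have h1 : ∑ i : Fin (k+1), ν {a | Rk a i < m}
        = ∫⁻ a, ∑ i : Fin (k+1),
            ({a : Fin (k+1) → ℝ | Rk a i < m}).indicator (fun _ => (1:ℝ≥0∞)) a ∂ν := by
      rw [lintegral_finset_sum _ (fun i _ =>
        (measurable_const.indicator (hSmeas i)))]
      exact Finset.sum_congr rfl fun i _ => (lintegral_indicator_one (hSmeas i)).symm
    rw [h1]
    calc ∫⁻ a, ∑ i : Fin (k+1),
            ({a : Fin (k+1) → ℝ | Rk a i < m}).indicator (fun _ => (1:ℝ≥0∞)) a ∂ν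
        ≤ ∫⁻ _, (m : ℝ≥0∞) ∂ν := by
          apply lintegral_mono
          intro a
          dsimp only
          have : ∑ i : Fin (k+1),
              ({a : Fin (k+1) → ℝ | Rk a i < m}).indicator (fun _ => (1:ℝ≥0∞)) a
              = ((Finset.univ.filter fun i : Fin (k+1) => Rk a i < m).card : ℝ≥0∞) := by
            rw [← Finset.sum_boole]
            congr 1
            ext i
            simp [Set.indicator_apply]
          rw [this]
          exact_mod_cast Nat.cast_le.mpr (Rk_card_le a m)
      _ = (m : ℝ≥0∞) := by simp
  have hconst : ∑ i : Fin (k+1), ν {a | Rk a i < m}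
      = ((k:ℝ≥0∞) + 1) * ν {a | Rk a (Fin.last k) < m} := by
    rw [Finset.sum_congr rfl fun i _ => key i, Finset.sum_const, Finset.card_univ,
      Fintype.card_fin]
    ring
  rw [hconst] at hsum
  have hle : ν {a | Rk a (Fin.last k) < m} ≤ (m : ℝ≥0∞) / ((k:ℝ≥0∞) + 1) := by
    rw [ENNReal.le_div_iff_mul_le (Or.inl (by simp)) (Or.inl (by finiteness))]
    rw [mul_comm]
    exact hsum
  refine hle.trans ?_
  have : (m : ℝ≥0∞) / ((k:ℝ≥0∞) + 1) = ENNReal.ofReal ((m:ℝ) / ((k:ℝ) + 1)) := by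
    rw [ENNReal.ofReal_div_of_pos hkpos]
    congr 1
    · exact (ENNReal.ofReal_natCast m).symm
    · rw [← ENNReal.ofReal_natCast k, ← ENNReal.ofReal_one, ← ENNReal.ofReal_add
        (by positivity) zero_le_one]
  rw [this]
  apply ENNReal.ofReal_le_ofReal
  rw [div_le_iff₀ hkpos]
  exact Nat.floor_le hεk
end

section
/- If P_1, ..., P_n are independent random variables each taking values in (0,1] and each satisfying Pr(P_k < u) ≤ u for all u ∈ (0,1) (i.e., each is super-uniform), then Pr(∏_{k=1}^n P_k ≤ t) ≤ F_n(t) = t·∑_{i=0}^{n-1}(-log t)^i/i! for all t ∈ (0,1]. -/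
open MeasureTheory ProbabilityTheory Set
open scoped ENNReal

/-- Fisher's combination function `F_n(t) = t · ∑_{i=0}^{n-1} (-log t)^i / i!`. -/
noncomputable def fisherF (n : ℕ) (t : ℝ) : ℝ :=
  t * ∑ i ∈ Finset.range n, (-Real.log t) ^ i / (Nat.factorial i)



lemma fisherF_nonneg (n : ℕ) {t : ℝ} (h0 : 0 < t) (h1 : t ≤ 1) : 0 ≤ fisherF n t := by
  have hlog : 0 ≤ -Real.log t := by
    have := Real.log_nonpos h0.le h1; linarith
  exact mul_nonneg h0.le (Finset.sum_nonneg fun i _ =>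
    div_nonneg (pow_nonneg hlog i) (Nat.cast_nonneg _))

lemma fisherF_ge (n : ℕ) {t : ℝ} (h0 : 0 < t) (h1 : t ≤ 1) : t ≤ fisherF (n + 1) t := by
  have hlog : 0 ≤ -Real.log t := by
    have := Real.log_nonpos h0.le h1; linarith
  have hsum : (1 : ℝ) ≤ ∑ i ∈ Finset.range (n + 1), (-Real.log t) ^ i / (Nat.factorial i) := by
    rw [Finset.sum_range_succ']
    have : (0:ℝ) ≤ ∑ i ∈ Finset.range n, (-Real.log t) ^ (i+1) / (Nat.factorial (i+1)) :=
      Finset.sum_nonneg fun i _ => div_nonneg (pow_nonneg hlog _) (Nat.cast_nonneg _)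
    simp only [pow_zero, Nat.factorial_zero, Nat.cast_one, div_one]
    linarith
  calc t = t * 1 := (mul_one t).symm
    _ ≤ _ := by exact mul_le_mul_of_nonneg_left hsum h0.le

lemma hasDeriv_aux (m : ℕ) {t u : ℝ} (ht : 0 < t) (hu : 0 < u) :
    HasDerivAt (fun x => t * ∑ i ∈ Finset.range m,
      (Real.log x - Real.log t) ^ (i + 1) / (Nat.factorial (i + 1)))
      (fisherF m (t / u)) u := by
  have hL : HasDerivAt (fun x : ℝ => Real.log x - Real.log t) u⁻¹ u :=
    (Real.hasDerivAt_log hu.ne').sub_const _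
  have hterm : ∀ i : ℕ, HasDerivAt
      (fun x => (Real.log x - Real.log t) ^ (i + 1) / (Nat.factorial (i + 1)))
      ((Real.log u - Real.log t) ^ i / (Nat.factorial i) * u⁻¹) u := by
    intro i
    have h := (hL.pow (i + 1)).div_const ((Nat.factorial (i + 1) : ℝ))
    refine h.congr_deriv (Eq.symm ?_)
    rw [Nat.factorial_succ]
    have hfac : (Nat.factorial i : ℝ) ≠ 0 := Nat.cast_ne_zero.mpr (Nat.factorial_ne_zero i)
    push_cast
    field_simp
  have hsum := HasDerivAt.fun_sum (fun i (_ : i ∈ Finset.range m) => hterm i)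
  have := hsum.const_mul t
  refine this.congr_deriv (Eq.symm ?_)
  have hlog : -Real.log (t / u) = Real.log u - Real.log t := by
    rw [Real.log_div ht.ne' hu.ne']; ring
  simp only [fisherF, hlog, Finset.mul_sum]
  refine Finset.sum_congr rfl fun i _ => ?_
  rw [div_eq_mul_inv]
  ring

lemma integral_aux (m : ℕ) {t : ℝ} (ht : t ∈ Ioo (0:ℝ) 1) :
    ∫ u in Ioo t 1, fisherF m (t / u) = fisherF (m + 1) t - t := by
  have ht0 := ht.1
  have ht1 := ht.2
  have hcont : ContinuousOn (fun u : ℝ => fisherF m (t / u)) (Icc t 1) := by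
    have hne : ∀ u ∈ Icc t 1, u ≠ 0 := fun u hu => (lt_of_lt_of_le ht0 hu.1).ne'
    have hdiv : ContinuousOn (fun u : ℝ => t / u) (Icc t 1) :=
      continuousOn_const.div continuousOn_id hne
    have hdne : ∀ u ∈ Icc t 1, t / u ≠ 0 := fun u hu =>
      (div_pos ht0 (lt_of_lt_of_le ht0 hu.1)).ne'
    unfold fisherF
    exact hdiv.mul <| continuousOn_finset_sum _ fun i _ =>
      (((hdiv.log hdne).neg.pow i).div_const _)
  have heq : ∫ u in Ioo t 1, fisherF m (t / u) = ∫ u in t..1, fisherF m (t / u) := by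
    rw [intervalIntegral.integral_of_le ht1.le, MeasureTheory.integral_Ioc_eq_integral_Ioo]
  rw [heq]
  have hderiv : ∀ u ∈ Set.uIcc t 1, HasDerivAt (fun x => t * ∑ i ∈ Finset.range m,
      (Real.log x - Real.log t) ^ (i + 1) / (Nat.factorial (i + 1)))
      (fisherF m (t / u)) u := by
    intro u hu
    rw [Set.uIcc_of_le ht1.le] at hu
    exact hasDeriv_aux m ht0 (lt_of_lt_of_le ht0 hu.1)
  have hint : IntervalIntegrable (fun u => fisherF m (t / u)) volume t 1 := by
    apply ContinuousOn.intervalIntegrable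
    rwa [Set.uIcc_of_le ht1.le]
  rw [intervalIntegral.integral_eq_sub_of_hasDerivAt hderiv hint]
  simp only [Real.log_one, zero_sub, sub_self]
  have h2 : ∀ i : ℕ, (0:ℝ) ^ (i+1) / (Nat.factorial (i+1)) = 0 := by
    intro i; rw [zero_pow (Nat.succ_ne_zero i)]; simp
  simp only [h2, Finset.sum_const_zero, mul_zero, sub_zero]
  rw [fisherF, Finset.sum_range_succ']
  simp only [pow_zero, Nat.factorial_zero, Nat.cast_one, div_one]
  rw [mul_add, mul_one, add_sub_cancel_right, Finset.mul_sum]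

example : True := trivial



lemma lint_aux (m : ℕ) {t : ℝ} (ht : t ∈ Ioo (0:ℝ) 1) :
    ∫⁻ u in Ioo (0:ℝ) 1,
      (if u ≤ t then 1 else ENNReal.ofReal (fisherF m (t / u)))
      = ENNReal.ofReal (fisherF (m + 1) t) := by
  have ht0 := ht.1
  have ht1 := ht.2
  have hsplit : Ioo (0:ℝ) 1 = Ioc 0 t ∪ Ioo t 1 := (Set.Ioc_union_Ioo_eq_Ioo ht0.le ht1).symm
  have hdisj : Disjoint (Ioc (0:ℝ) t) (Ioo t 1) := by
    apply Set.disjoint_left.mpr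
    rintro x ⟨_, hx2⟩ ⟨hx3, _⟩
    exact absurd hx3 (not_lt.mpr hx2)
  rw [hsplit, lintegral_union measurableSet_Ioo hdisj]
  have h1 : ∫⁻ u in Ioc (0:ℝ) t,
      (if u ≤ t then 1 else ENNReal.ofReal (fisherF m (t / u))) = ENNReal.ofReal t := by
    rw [setLIntegral_congr_fun measurableSet_Ioc
      (fun u (hu : u ∈ Ioc (0:ℝ) t) => if_pos hu.2)]
    simp [Real.volume_Ioc]
  have hcont : ContinuousOn (fun u : ℝ => fisherF m (t / u)) (Icc t 1) := by
    have hne : ∀ u ∈ Icc t 1, u ≠ 0 := fun u hu => (lt_of_lt_of_le ht0 hu.1).ne'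
    have hdiv : ContinuousOn (fun u : ℝ => t / u) (Icc t 1) :=
      continuousOn_const.div continuousOn_id hne
    have hdne : ∀ u ∈ Icc t 1, t / u ≠ 0 := fun u hu =>
      (div_pos ht0 (lt_of_lt_of_le ht0 hu.1)).ne'
    unfold fisherF
    exact hdiv.mul <| continuousOn_finset_sum _ fun i _ =>
      (((hdiv.log hdne).neg.pow i).div_const _)
  have hint : IntegrableOn (fun u : ℝ => fisherF m (t / u)) (Ioo t 1) :=
    (hcont.integrableOn_Icc).mono_set Set.Ioo_subset_Icc_self
  have hnn : 0 ≤ᵐ[volume.restrict (Ioo t 1)] fun u : ℝ => fisherF m (t / u) := by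
    refine (ae_restrict_iff' measurableSet_Ioo).mpr (ae_of_all _ fun u hu => ?_)
    have hu0 : 0 < u := lt_trans ht0 hu.1
    exact fisherF_nonneg m (div_pos ht0 hu0) ((div_le_one hu0).mpr hu.1.le)
  have h2 : ∫⁻ u in Ioo t 1,
      (if u ≤ t then 1 else ENNReal.ofReal (fisherF m (t / u)))
      = ENNReal.ofReal (fisherF (m + 1) t - t) := by
    rw [setLIntegral_congr_fun measurableSet_Ioo
      (fun u (hu : u ∈ Ioo t 1) => if_neg (not_le.mpr hu.1))]
    rw [← ofReal_integral_eq_lintegral_ofReal hint hnn, integral_aux m ht]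
  rw [h1, h2, ← ENNReal.ofReal_add ht0.le (by linarith [fisherF_ge m ht0 ht1.le])]
  ring_nf

lemma super_le {Ω : Type*} [MeasurableSpace Ω] (μ : Measure Ω) [IsProbabilityMeasure μ]
    (X : Ω → ℝ) (hsuper : ∀ u ∈ Ioo (0:ℝ) 1, μ {ω | X ω < u} ≤ ENNReal.ofReal u)
    {s : ℝ} (hs : s ∈ Ioo (0:ℝ) 1) : μ {ω | X ω ≤ s} ≤ ENNReal.ofReal s := by
  refine ENNReal.le_of_forall_pos_le_add fun ε hε _ => ?_
  set v : ℝ := min ((s + 1) / 2) (s + ε / 2) with hv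
  have hε' : (0:ℝ) < ε := hε
  have hv1 : s < v := lt_min (by linarith [hs.2]) (by linarith)
  have hv2 : v < 1 := lt_of_le_of_lt (min_le_left _ _) (by linarith [hs.2])
  have hv0 : 0 < v := lt_trans hs.1 hv1
  have hsub : {ω | X ω ≤ s} ⊆ {ω | X ω < v} := fun ω h => lt_of_le_of_lt h hv1
  calc μ {ω | X ω ≤ s} ≤ μ {ω | X ω < v} := measure_mono hsub
    _ ≤ ENNReal.ofReal v := hsuper v ⟨hv0, hv2⟩
    _ ≤ ENNReal.ofReal (s + ε) := ENNReal.ofReal_le_ofReal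
        (le_trans (min_le_right _ _) (by linarith))
    _ = ENNReal.ofReal s + ENNReal.ofReal (ε:ℝ) := ENNReal.ofReal_add hs.1.le hε'.le
    _ = ENNReal.ofReal s + ε := by rw [ENNReal.ofReal_coe_nnreal]




lemma fisher_key {Ω : Type*} [MeasurableSpace Ω] (μ : Measure Ω) [IsProbabilityMeasure μ]
    (n : ℕ) (P : Fin n → Ω → ℝ) (hPmeas : ∀ i, Measurable (P i))
    (hindep : iIndepFun P μ)
    (hrange : ∀ i, ∀ ω, P i ω ∈ Set.Ioc (0 : ℝ) 1)
    (hsuper : ∀ i, ∀ u ∈ Set.Ioo (0 : ℝ) 1, μ {ω | P i ω < u} ≤ ENNReal.ofReal u)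
    (s : Finset (Fin n)) :
    ∀ t ∈ Set.Ioo (0 : ℝ) 1,
      μ {ω | ∏ i ∈ s, P i ω ≤ t} ≤ ENNReal.ofReal (fisherF s.card t) := by
  induction s using Finset.cons_induction with
  | empty =>
    intro t ht
    have : {ω | ∏ i ∈ (∅ : Finset (Fin n)), P i ω ≤ t} = ∅ := by
      ext ω; simp [not_le.mpr ht.2]
    rw [this]
    simp
  | cons a s' ha ih =>
    intro t ht
    have ht0 := ht.1
    have ht1 := ht.2
    set Q : Ω → ℝ := fun ω => ∏ i ∈ s', P i ω with hQ
    have hQmeas : Measurable Q := Finset.measurable_prod _ fun i _ => hPmeas i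
    have hQrange : ∀ ω, Q ω ∈ Ioc (0:ℝ) 1 := by
      intro ω
      constructor
      · exact Finset.prod_pos fun i _ => (hrange i ω).1
      · exact Finset.prod_le_one (fun i _ => (hrange i ω).1.le) (fun i _ => (hrange i ω).2
        )
    have hPQ : IndepFun Q (P a) μ := by
      have h := hindep.indepFun_finsetProd_of_notMem hPmeas (s := s') (i := a) ha
      have hQeq : Q = ∏ j ∈ s', P j := by
        ext ω; rw [hQ]; simp [Finset.prod_apply]
      rwa [hQeq]
    have hmap : μ.map (fun ω => (Q ω, P a ω)) = (μ.map Q).prod (μ.map (P a)) :=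
      (indepFun_iff_map_prod_eq_prod_map_map hQmeas.aemeasurable
        (hPmeas a).aemeasurable).mp hPQ
    have hA : MeasurableSet {p : ℝ × ℝ | p.1 * p.2 ≤ t} :=
      measurableSet_le (measurable_fst.mul measurable_snd) measurable_const
    have hQprob : IsProbabilityMeasure (μ.map Q) :=
      Measure.isProbabilityMeasure_map hQmeas.aemeasurable
    have hPaprob : IsProbabilityMeasure (μ.map (P a)) :=
      Measure.isProbabilityMeasure_map (hPmeas a).aemeasurable
    have hseteq : {ω | ∏ i ∈ Finset.cons a s' ha, P i ω ≤ t}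
        = (fun ω => (Q ω, P a ω)) ⁻¹' {p : ℝ × ℝ | p.1 * p.2 ≤ t} := by
      ext ω
      simp only [Finset.prod_cons, Set.mem_setOf_eq, Set.mem_preimage, hQ]
      rw [mul_comm]
    rw [hseteq, ← Measure.map_apply (hQmeas.prodMk (hPmeas a)) hA, hmap,
      Measure.prod_apply hA]
    -- a.e. bound over q
    have haeQ : ∀ᵐ q ∂(μ.map Q), q ∈ Ioc (0:ℝ) 1 :=
      (ae_map_iff hQmeas.aemeasurable measurableSet_Ioc).mpr (ae_of_all _ hQrange)
    set ν : Measure ℝ := volume.restrict (Ioo (0:ℝ) 1) with hν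
    have hstep1 : ∫⁻ q, (μ.map (P a)) (Prod.mk q ⁻¹' {p : ℝ × ℝ | p.1 * p.2 ≤ t}) ∂(μ.map Q)
        ≤ ∫⁻ q, ν (Prod.mk q ⁻¹' {p : ℝ × ℝ | p.1 * p.2 ≤ t}) ∂(μ.map Q) := by
      refine lintegral_mono_ae (haeQ.mono fun q hq => ?_)
      have hq0 : 0 < q := hq.1
      have hpre : Prod.mk q ⁻¹' {p : ℝ × ℝ | p.1 * p.2 ≤ t} = Iic (t / q) := by
        ext x; simp only [Set.mem_preimage, Set.mem_setOf_eq, Set.mem_Iic]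
        rw [mul_comm, ← le_div_iff₀ hq0]
      rw [hpre, Measure.map_apply (hPmeas a) measurableSet_Iic]
      have htq0 : 0 < t / q := div_pos ht0 hq0
      by_cases h1 : 1 ≤ t / q
      · have : ν (Iic (t / q)) = 1 := by
          rw [hν, Measure.restrict_apply measurableSet_Iic]
          have hsub : Ioo (0:ℝ) 1 ⊆ Iic (t / q) := fun x hx => le_trans hx.2.le h1
          rw [Set.inter_eq_self_of_subset_right hsub]
          simp [Real.volume_Ioo]
        rw [this]
        exact prob_le_one
      · push_neg at h1
        have : ν (Iic (t / q)) = ENNReal.ofReal (t / q) := by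
          rw [hν, Measure.restrict_apply measurableSet_Iic]
          have : Iic (t / q) ∩ Ioo 0 1 = Ioc 0 (t / q) := by
            ext x
            simp only [Set.mem_inter_iff, Set.mem_Iic, Set.mem_Ioo, Set.mem_Ioc]
            constructor
            · rintro ⟨h, h2, _⟩; exact ⟨h2, h⟩
            · rintro ⟨h2, h⟩; exact ⟨h, h2, lt_of_le_of_lt h h1⟩
          rw [this, Real.volume_Ioc]
          simp
        rw [this]
        exact super_le μ (P a) (hsuper a) ⟨htq0, h1⟩
    refine le_trans hstep1 ?_
    -- Fubini swap
    have hswap : ∫⁻ q, ν (Prod.mk q ⁻¹' {p : ℝ × ℝ | p.1 * p.2 ≤ t}) ∂(μ.map Q)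
        = ∫⁻ u, (μ.map Q) ((fun q => (q, u)) ⁻¹' {p : ℝ × ℝ | p.1 * p.2 ≤ t}) ∂ν := by
      rw [← Measure.prod_apply hA, Measure.prod_apply_symm hA]
    rw [hswap]
    -- bound inner over u
    have hstep2 : ∫⁻ u, (μ.map Q) ((fun q => (q, u)) ⁻¹' {p : ℝ × ℝ | p.1 * p.2 ≤ t}) ∂ν
        ≤ ∫⁻ u, (if u ≤ t then 1 else ENNReal.ofReal (fisherF s'.card (t / u))) ∂ν := by
      refine lintegral_mono_ae ((ae_restrict_iff' measurableSet_Ioo).mpr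
        (ae_of_all _ fun u hu => ?_))
      have hu0 : 0 < u := hu.1
      have hpre : (fun q => (q, u)) ⁻¹' {p : ℝ × ℝ | p.1 * p.2 ≤ t} = Iic (t / u) := by
        ext x; simp only [Set.mem_preimage, Set.mem_setOf_eq, Set.mem_Iic]
        rw [← le_div_iff₀ hu0]
      rw [hpre, Measure.map_apply hQmeas measurableSet_Iic]
      by_cases h1 : u ≤ t
      · rw [if_pos h1]; exact prob_le_one
      · rw [if_neg h1]
        push_neg at h1
        have htu : t / u ∈ Ioo (0:ℝ) 1 :=
          ⟨div_pos ht0 hu0, (div_lt_one hu0).mpr h1⟩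
        exact ih (t / u) htu
    refine le_trans hstep2 ?_
    rw [hν]
    rw [lint_aux s'.card ht, Finset.card_cons]

/-- Fisher's method remains valid for super-uniform p-values: if `P_1, ..., P_n` are
independent, take values in `(0,1]`, and satisfy `Pr(P_k < u) ≤ u` for all `u ∈ (0,1)`,
then `Pr(∏ P_k ≤ t) ≤ F_n(t)` for all `t ∈ (0,1]`. -/
theorem fisher_valid_super_uniform
    {Ω : Type*} [MeasurableSpace Ω] (μ : Measure Ω) [IsProbabilityMeasure μ]
    (n : ℕ) (hn : 0 < n) (P : Fin n → Ω → ℝ) (hPmeas : ∀ i, Measurable (P i))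
    (hindep : iIndepFun P μ)
    (hrange : ∀ i, ∀ ω, P i ω ∈ Set.Ioc (0 : ℝ) 1)
    (hsuper : ∀ i, ∀ u ∈ Set.Ioo (0 : ℝ) 1, μ {ω | P i ω < u} ≤ ENNReal.ofReal u) :
    ∀ t ∈ Set.Ioc (0 : ℝ) 1,
      μ {ω | ∏ i, P i ω ≤ t} ≤ ENNReal.ofReal (fisherF n t) := by
  intro t ht
  rcases eq_or_lt_of_le ht.2 with h1 | h1
  · -- t = 1
    have hF : fisherF n 1 = 1 := by
      obtain ⟨m, rfl⟩ := Nat.exists_eq_succ_of_ne_zero hn.ne'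
      simp [fisherF, Finset.sum_range_succ', zero_pow]
    rw [h1, hF]
    simpa using prob_le_one
  · have := fisher_key μ n P hPmeas hindep hrange hsuper Finset.univ t ⟨ht.1, h1⟩
    simpa using this
end
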